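/- A set P ⊆ ℤ is a Birkhoff recurrence set of order d for every integer d ≥ 1 if and only if P contains finite IP-sets of arbitrarily long lengths (in the paper's notation, F_{B_∞} = F_{fip}). -/

import Mathlib

open scoped Classical
open MeasureTheory Filter Topology

noncomputable section

/-- Integer iterate of a bijection `T` of a set: `zIter T n = T^n`. -/
def zIter {X : Type*} (T : Equiv.Perm X) (n : ℤ) : X → X := ⇑(T ^ n)

/-- Integer iterate of a homeomorphism. -/
def hIter {X : Type*} [TopologicalSpace X] (T : X ≃ₜ X) (n : ℤ) : X → X :=
  zIter T.toEquiv n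

/-- The integer nearest to `a`, with ties broken towards the smaller integer.
This is the `⌈·⌉` of the paper. -/
def nearInt (a : ℝ) : ℤ := if a - (⌊a⌋ : ℝ) ≤ 1/2 then ⌊a⌋ else ⌈a⌉

/-- The distance from `a` to the nearest integer, i.e. `‖a‖` in the paper. -/
def distInt (a : ℝ) : ℝ := |a - (nearInt a : ℝ)|

/-- Generalized polynomials of degree at most `d` (for `d ≥ 1`):
`GP 1` is the smallest collection of functions `ℤ → ℝ` containing `n ↦ a n`
and closed under taking the nearest integer, scalar multiplication and finite sums;
`GP d` moreover contains every `GP e` for `e < d` and all functions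
`n ↦ a₀ n^{p₀} ⌈f₁(n)⌉ ⋯ ⌈f k (n)⌉` with `f l ∈ GP (p l)` and `p₀ + ∑ p l = d`. -/
inductive GP : ℕ → (ℤ → ℝ) → Prop
  | lin (a : ℝ) : GP 1 (fun n => a * n)
  | mono {d : ℕ} (hd : 1 ≤ d) (a₀ : ℝ) (p₀ : ℕ) {k : ℕ} (p : Fin k → ℕ)
      (f : Fin k → ℤ → ℝ) (hf : ∀ l, GP (p l) (f l)) (hsum : p₀ + ∑ l, p l = d) :
      GP d (fun n => a₀ * (n : ℝ) ^ p₀ * ∏ l, (nearInt (f l n) : ℝ))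
  | incl {d e : ℕ} (hed : e < d) {f : ℤ → ℝ} (hf : GP e f) : GP d f
  | ceil {d : ℕ} {f : ℤ → ℝ} (hf : GP d f) : GP d (fun n => (nearInt (f n) : ℝ))
  | smul {d : ℕ} (c : ℝ) {f : ℤ → ℝ} (hf : GP d f) : GP d (fun n => c * f n)
  | add {d : ℕ} {f g : ℤ → ℝ} (hf : GP d f) (hg : GP d g) : GP d (fun n => f n + g n)

/-- The bracket expression `L(a₁, …, a_ℓ) = a₁⌈L(a₂, …, a_ℓ)⌉`, `L(a) = a`. -/
def Lfun : List ℝ → ℝ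
  | [] => 0
  | [a] => a
  | a :: b :: rest => a * (nearInt (Lfun (b :: rest)) : ℝ)

/-- Special generalized polynomials of degree at most `d`:
the functions `n ↦ L(n^{j₁} a₁, …, n^{j_ℓ} a_ℓ)` with `1 ≤ ℓ`, `j t ≥ 1`, `∑ j t ≤ d`. -/
def SGP (d : ℕ) (g : ℤ → ℝ) : Prop :=
  ∃ ℓ : ℕ, 1 ≤ ℓ ∧ ∃ (a : Fin ℓ → ℝ) (j : Fin ℓ → ℕ),
    (∀ t, 1 ≤ j t) ∧ (∑ t, j t) ≤ d ∧
    g = fun n : ℤ => Lfun (List.ofFn fun t => (n : ℝ) ^ (j t) * a t)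

/-- `FS({n i}) = {n_{i₁} + ⋯ + n_{i_k} : i₁ < ⋯ < i_k}`, the set of finite sums. -/
def FS {d : ℕ} (n : Fin d → ℤ) : Set ℤ :=
  { m | ∃ I : Finset (Fin d), I.Nonempty ∧ m = ∑ i ∈ I, n i }

/-- `SG d P`: sums `p_{i₁} + ⋯ + p_{i_k}` over strictly increasing finite index
sequences whose consecutive gaps are at most `d` (infinite sequence `P`). -/
def SG (d : ℕ) (P : ℕ → ℤ) : Set ℤ :=
  { n | ∃ k : ℕ, ∃ i : Fin (k + 1) → ℕ, StrictMono i ∧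
      (∀ t : Fin k, i t.succ - i t.castSucc ≤ d) ∧ n = ∑ t, P (i t) }

/-- `SGfin d P` : the same for a finite sequence `P` of length `m`. -/
def SGfin (d : ℕ) {m : ℕ} (P : Fin m → ℤ) : Set ℤ :=
  { n | ∃ k : ℕ, ∃ i : Fin (k + 1) → Fin m, StrictMono i ∧
      (∀ t : Fin k, (i t.succ : ℕ) - (i t.castSucc : ℕ) ≤ d) ∧ n = ∑ t, P (i t) }

/-- A set of integers is syndetic if it has bounded gaps. -/
def Syndetic (A : Set ℤ) : Prop :=
  ∃ N : ℕ, ∀ i : ℤ, ∃ j, i ≤ j ∧ j ≤ i + N ∧ j ∈ A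

/-- `F` has positive upper Banach density. -/
def PosUpperBanachDensity (F : Set ℤ) : Prop :=
  ∃ δ : ℝ, 0 < δ ∧ ∀ N : ℕ, ∃ (a : ℤ) (L : ℕ), N ≤ L ∧ 1 ≤ L ∧
    δ * L ≤ ((Finset.Icc a (a + L - 1)).filter (fun x => x ∈ F)).card

/-- A set `A ⊆ ℤ` contains finite IP-sets of arbitrarily long lengths. -/
def ContainsArbLongFIP (A : Set ℤ) : Prop :=
  ∀ k : ℕ, 1 ≤ k → ∃ p : Fin k → ℤ, FS p ⊆ A

/-- A topological dynamical system `(X, T)` is minimal: every orbit is dense. -/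
def MinimalTDS {X : Type*} [TopologicalSpace X] (T : X ≃ₜ X) : Prop :=
  ∀ x : X, Dense (Set.range fun n : ℤ => hIter T n x)

/-- `Nset T x U = N(x, U) = {n ∈ ℤ : Tⁿ x ∈ U}`. -/
def Nset {X : Type*} [TopologicalSpace X] (T : X ≃ₜ X) (x : X) (U : Set X) : Set ℤ :=
  { n : ℤ | hIter T n x ∈ U }

/-- The regionally proximal relation of order `d`. -/
def RPd {X : Type*} [MetricSpace X] (T : X ≃ₜ X) (d : ℕ) (x y : X) : Prop :=
  ∀ δ : ℝ, 0 < δ → ∃ (x' y' : X) (n : Fin d → ℤ),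
    dist x x' < δ ∧ dist y y' < δ ∧
    ∀ ε : Finset (Fin d), ε.Nonempty →
      dist (hIter T (∑ i ∈ ε, n i) x') (hIter T (∑ i ∈ ε, n i) y') < δ

/-- `S` is a set of `d`-topological recurrence. -/
def TopRecSet (d : ℕ) (S : Set ℤ) : Prop :=
  ∀ (X : Type) [MetricSpace X] [CompactSpace X] (T : X ≃ₜ X), MinimalTDS T →
    ∀ U : Set X, IsOpen U → U.Nonempty →
      ∃ n ∈ S, (⋂ j ∈ Finset.range (d + 1), hIter T ((j : ℤ) * n) ⁻¹' U).Nonempty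

/-- `S` is a set of `d`-recurrence (measurable recurrence). -/
def MeasRecSet (d : ℕ) (S : Set ℤ) : Prop :=
  ∀ (Y : Type) [MeasurableSpace Y] [StandardBorelSpace Y]
    (μ : Measure Y) [IsProbabilityMeasure μ] (T : Y ≃ᵐ Y),
    MeasurePreserving (⇑T) μ μ →
    ∀ A : Set Y, MeasurableSet A → 0 < μ A →
      ∃ n ∈ S, 0 < μ (⋂ j ∈ Finset.range (d + 1), zIter T.toEquiv ((j : ℤ) * n) ⁻¹' A)

/-- `P` is a Birkhoff recurrence set of order `d`. -/
def BirkhoffRecSet (d : ℕ) (P : Set ℤ) : Prop :=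
  ∀ (X : Type) [MetricSpace X] [CompactSpace X] (T : X ≃ₜ X), MinimalTDS T →
    ∀ U : Set X, IsOpen U → U.Nonempty →
      ∃ n : Fin d → ℤ, FS n ⊆ P ∧ (U ∩ ⋂ m ∈ FS n, hIter T m ⁻¹' U).Nonempty

/-- `F` is a Poincaré recurrence set of order `d`. -/
def PoincareRecSet (d : ℕ) (F : Set ℤ) : Prop :=
  ∀ (Y : Type) [MeasurableSpace Y] [StandardBorelSpace Y]
    (μ : Measure Y) [IsProbabilityMeasure μ] (T : Y ≃ᵐ Y),
    MeasurePreserving (⇑T) μ μ →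
    ∀ A : Set Y, MeasurableSet A → 0 < μ A →
      ∃ n : Fin d → ℤ, FS n ⊆ F ∧ 0 < μ (A ∩ ⋂ m ∈ FS n, zIter T.toEquiv m ⁻¹' A)

/-- The upper unitriangular matrix `M(a)` with entries `(M(a))_{i, i+k} = a i k`
(1-based indexing). -/
def Mmat (d : ℕ) (a : ℕ → ℕ → ℝ) : Matrix (Fin (d + 1)) (Fin (d + 1)) ℝ :=
  fun r c =>
    if (r : ℕ) = (c : ℕ) then 1
    else if (r : ℕ) < (c : ℕ) then a ((r : ℕ) + 1) ((c : ℕ) - (r : ℕ)) else 0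

/-- `P_ℓ(a; i, k) = ∑ a_i^{s₁} a_{i+s₁}^{s₂} ⋯`, sum over `(s₁,…,s_ℓ) ∈ {1,…,k}^ℓ`
with `s₁ + ⋯ + s_ℓ = k`. -/
def Ppoly (a : ℕ → ℕ → ℝ) (i k ℓ : ℕ) : ℝ :=
  ∑ s ∈ Finset.univ.filter (fun s : Fin ℓ → Fin k => (∑ t, ((s t : ℕ) + 1)) = k),
    ∏ t : Fin ℓ,
      a (i + ∑ u ∈ Finset.univ.filter (fun u : Fin ℓ => u < t), ((s u : ℕ) + 1))
        ((s t : ℕ) + 1)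

/-- The upper unitriangular matrix with superdiagonal `α₁, …, α_d` (1-based). -/
def Amat (d : ℕ) (α : ℕ → ℝ) : Matrix (Fin (d + 1)) (Fin (d + 1)) ℝ :=
  fun r c =>
    if (r : ℕ) = (c : ℕ) then 1
    else if (c : ℕ) = (r : ℕ) + 1 then α ((r : ℕ) + 1) else 0

end

/-- `F_{B_∞} = F_{fip}` : `P` is a Birkhoff recurrence set of every order iff `P`
contains finite IP-sets of arbitrarily long lengths. -/

lemma pow3_digits : ∀ (N : ℕ) (f g : ℕ → ℕ), (∀ i, f i ≤ 2) → (∀ i, g i ≤ 2) →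
    (∑ i ∈ Finset.range N, f i * 3 ^ i = ∑ i ∈ Finset.range N, g i * 3 ^ i) →
    ∀ i < N, f i = g i := by
  intro N
  induction N with
  | zero => intro f g _ _ _ i hi; omega
  | succ N ih =>
    intro f g hf hg h i hi
    rw [Finset.sum_range_succ' (fun i => f i * 3 ^ i), Finset.sum_range_succ' (fun i => g i * 3 ^ i)] at h
    have e1 : ∀ (f : ℕ → ℕ), ∑ i ∈ Finset.range N, f (i+1) * 3 ^ (i+1)
        = 3 * ∑ i ∈ Finset.range N, f (i+1) * 3 ^ i := by
      intro f
      rw [Finset.mul_sum]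
      apply Finset.sum_congr rfl
      intro j _; ring
    rw [e1 f, e1 g] at h
    simp only [pow_zero, mul_one] at h
    have h0 : f 0 = g 0 ∧ (∑ i ∈ Finset.range N, f (i+1) * 3 ^ i) =
        (∑ i ∈ Finset.range N, g (i+1) * 3 ^ i) := by
      have := hf 0; have := hg 0; omega
    rcases i with _ | j
    · exact h0.1
    · exact ih (fun i => f (i+1)) (fun i => g (i+1)) (fun i => hf _) (fun i => hg _) h0.2 j (by omega)

lemma sum_pow3_indicator (W : Finset ℕ) {N : ℕ} (hW : W ⊆ Finset.range N) :
    ∑ i ∈ Finset.range N, (if i ∈ W then 1 else 0) * 3 ^ i = ∑ i ∈ W, 3 ^ i := by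
  have e : ∀ i ∈ Finset.range N, (if i ∈ W then 1 else 0) * 3 ^ i = if i ∈ W then 3 ^ i else 0 :=
    fun i _ => by split <;> simp
  rw [Finset.sum_congr rfl e, ← Finset.sum_filter, Finset.filter_mem_eq_inter,
    Finset.inter_eq_right.mpr hW]

lemma sum_pow3_inj {W V : Finset ℕ} (h : ∑ i ∈ W, 3 ^ i = ∑ i ∈ V, 3 ^ i) : W = V := by
  obtain ⟨N1, h1⟩ := W.exists_nat_subset_range
  obtain ⟨N2, h2⟩ := V.exists_nat_subset_range
  set N := max N1 N2
  have hWN : W ⊆ Finset.range N := h1.trans (Finset.range_subset_range.mpr (le_max_left _ _))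
  have hVN : V ⊆ Finset.range N := h2.trans (Finset.range_subset_range.mpr (le_max_right _ _))
  have := pow3_digits N (fun i => if i ∈ W then 1 else 0) (fun i => if i ∈ V then 1 else 0)
    (fun i => by split <;> omega) (fun i => by split <;> omega)
    (by rw [sum_pow3_indicator W hWN, sum_pow3_indicator V hVN]; exact h)
  ext i
  constructor
  · intro hiW
    have hi := this i (Finset.mem_range.mp (hWN hiW))
    simp [hiW] at hi
    by_contra hiV; simp [hiV] at hi
  · intro hiV
    have hi := this i (Finset.mem_range.mp (hVN hiV))
    simp [hiV] at hi
    by_contra hiW; simp [hiW] at hi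

lemma sum_pow3_add {A B V : Finset ℕ}
    (h : (∑ i ∈ A, 3 ^ i) + ∑ i ∈ B, 3 ^ i = ∑ i ∈ V, 3 ^ i) :
    Disjoint A B ∧ V = A ∪ B := by
  obtain ⟨N1, h1⟩ := A.exists_nat_subset_range
  obtain ⟨N2, h2⟩ := B.exists_nat_subset_range
  obtain ⟨N3, h3⟩ := V.exists_nat_subset_range
  set N := max N1 (max N2 N3)
  have hA : A ⊆ Finset.range N := h1.trans (Finset.range_subset_range.mpr (le_max_left _ _))
  have hB : B ⊆ Finset.range N := h2.trans (Finset.range_subset_range.mpr ((le_max_left _ _).trans (le_max_right _ _)))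
  have hV : V ⊆ Finset.range N := h3.trans (Finset.range_subset_range.mpr ((le_max_right _ _).trans (le_max_right _ _)))
  have key := pow3_digits N
    (fun i => (if i ∈ A then 1 else 0) + (if i ∈ B then 1 else 0))
    (fun i => if i ∈ V then 1 else 0)
    (fun i => by split <;> split <;> omega) (fun i => by split <;> omega)
    (by
      have : ∑ i ∈ Finset.range N, ((if i ∈ A then 1 else 0) + (if i ∈ B then 1 else 0)) * 3 ^ i
          = (∑ i ∈ Finset.range N, (if i ∈ A then 1 else 0) * 3 ^ i)
            + ∑ i ∈ Finset.range N, (if i ∈ B then 1 else 0) * 3 ^ i := by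
        rw [← Finset.sum_add_distrib]
        exact Finset.sum_congr rfl (fun i _ => by ring)
      rw [this, sum_pow3_indicator A hA, sum_pow3_indicator B hB, sum_pow3_indicator V hV, h])
  constructor
  · rw [Finset.disjoint_left]
    intro i hiA hiB
    have := key i (Finset.mem_range.mp (hA hiA))
    simp [hiA, hiB] at this
    split at this <;> omega
  · ext i
    by_cases hiN : i < N
    · have := key i hiN
      simp only [Finset.mem_union]
      constructor
      · intro hiV
        simp [hiV] at this
        by_contra hc
        push_neg at hc
        simp [hc.1, hc.2] at this
      · intro hc
        by_contra hiV
        simp [hiV] at this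
        rcases hc with hc | hc <;> simp [hc] at this <;> omega
    · constructor
      · intro hiV; exact absurd (Finset.mem_range.mp (hV hiV)) hiN
      · intro hc
        rcases Finset.mem_union.mp hc with hc | hc
        · exact absurd (Finset.mem_range.mp (hA hc)) hiN
        · exact absurd (Finset.mem_range.mp (hB hc)) hiN

lemma FS_pow3_rep : ∀ (s : Stream' ℕ) (m : ℕ), m ∈ Hindman.FS s →
    ∀ k : ℕ, s = (fun i => 3 ^ (i + k)) →
    ∃ W : Finset ℕ, W.Nonempty ∧ (∀ i ∈ W, k ≤ i) ∧ m = ∑ i ∈ W, 3 ^ i := by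
  intro s m h
  induction h with
  | head' a =>
    intro k hk
    refine ⟨{k}, ⟨k, by simp⟩, by simp, ?_⟩
    subst hk
    simp [Stream'.head, Stream'.get]
  | tail' a m h ih =>
    intro k hk
    have ht : a.tail = (fun i => 3 ^ (i + (k + 1))) := by
      subst hk
      funext i
      show (3:ℕ) ^ (i + 1 + k) = _
      congr 1
      omega
    obtain ⟨W, hW1, hW2, hW3⟩ := ih (k + 1) ht
    exact ⟨W, hW1, fun i hi => le_trans (by omega) (hW2 i hi), hW3⟩
  | cons' a m h ih =>
    intro k hk
    have ht : a.tail = (fun i => 3 ^ (i + (k + 1))) := by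
      subst hk
      funext i
      show (3:ℕ) ^ (i + 1 + k) = _
      congr 1
      omega
    obtain ⟨W, hW1, hW2, hW3⟩ := ih (k + 1) ht
    have hkW : k ∉ W := fun hc => by have := hW2 k hc; omega
    refine ⟨insert k W, ⟨k, by simp⟩, ?_, ?_⟩
    · intro i hi
      rcases Finset.mem_insert.mp hi with rfl | hi
      · exact le_refl _
      · exact le_trans (by omega) (hW2 i hi)
    · rw [Finset.sum_insert hkW, ← hW3]
      subst hk
      simp [Stream'.head, Stream'.get]

open scoped Classical in
/-- canonical representation of a sum of distinct powers of 3 -/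
noncomputable def chooseW (m : ℕ) : Finset ℕ :=
  if h : ∃ W : Finset ℕ, W.Nonempty ∧ m = ∑ i ∈ W, 3 ^ i then h.choose else ∅

lemma chooseW_eq {W : Finset ℕ} (hW : W.Nonempty) : chooseW (∑ i ∈ W, 3 ^ i) = W := by
  have h : ∃ V : Finset ℕ, V.Nonempty ∧ (∑ i ∈ W, 3 ^ i) = ∑ i ∈ V, 3 ^ i := ⟨W, hW, rfl⟩
  rw [chooseW, dif_pos h]
  exact (sum_pow3_inj h.choose_spec.2.symm)

lemma FUT_infinite (β : Type) [Finite β] [Nonempty β] (d : ℕ) (χ : Finset ℕ → β) :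
    ∃ (S : Fin (d + 1) → Finset ℕ) (c : β), (∀ t, (S t).Nonempty) ∧
      (Pairwise fun t u => Disjoint (S t) (S u)) ∧
      ∀ I : Finset (Fin (d + 1)), I.Nonempty → χ (I.biUnion S) = c := by
  classical
  set a : Stream' ℕ := (fun i => 3 ^ (i + 0)) with ha
  set ψ : ℕ → β := fun m => χ (chooseW m) with hψ
  set cells : Set (Set ℕ) := Set.range (fun c : β => {m | m ∈ Hindman.FS a ∧ ψ m = c}) with hcells
  have hfin : cells.Finite := Set.finite_range _
  have hcov : Hindman.FS a ⊆ ⋃₀ cells := by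
    intro m hm
    exact ⟨{m' | m' ∈ Hindman.FS a ∧ ψ m' = ψ m}, ⟨ψ m, rfl⟩, hm, rfl⟩
  obtain ⟨cell, hcellmem, b, hb⟩ := Hindman.FS_partition_regular a cells hfin hcov
  obtain ⟨c, rfl⟩ := hcellmem
  -- representation of each b.get i
  have hrep : ∀ m ∈ Hindman.FS a, ∃ W : Finset ℕ, W.Nonempty ∧ m = ∑ i ∈ W, 3 ^ i := by
    intro m hm
    obtain ⟨W, h1, _, h3⟩ := FS_pow3_rep a m hm 0 rfl
    exact ⟨W, h1, h3⟩
  have hbFS : ∀ i : ℕ, b.get i ∈ Hindman.FS a := fun i => (hb (Hindman.FS.singleton b i)).1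
  set S : Fin (d + 1) → Finset ℕ := fun t => chooseW (b.get (t : ℕ)) with hS
  have hSspec : ∀ t, (S t).Nonempty ∧ b.get (t : ℕ) = ∑ i ∈ S t, 3 ^ i := by
    intro t
    obtain ⟨W, h1, h3⟩ := hrep _ (hbFS (t : ℕ))
    rw [hS]; dsimp only
    rw [h3, chooseW_eq h1]
    exact ⟨h1, rfl⟩
  have hdisj : Pairwise fun t u => Disjoint (S t) (S u) := by
    have key : ∀ t u : Fin (d + 1), (t : ℕ) < (u : ℕ) → Disjoint (S t) (S u) := by
      intro t u htu
      have hmem := (hb (Hindman.FS.add_two b (t : ℕ) (u : ℕ) htu)).1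
      obtain ⟨V, _, hV3⟩ := hrep _ hmem
      rw [(hSspec t).2, (hSspec u).2] at hV3
      exact (sum_pow3_add hV3).1
    intro t u htu
    rcases lt_or_gt_of_ne (fun h : (t : ℕ) = (u : ℕ) => htu (Fin.ext h)) with h | h
    · exact key t u h
    · exact (key u t h).symm
  refine ⟨S, c, fun t => (hSspec t).1, hdisj, ?_⟩
  intro I hI
  set J : Finset ℕ := I.image (fun t : Fin (d + 1) => (t : ℕ)) with hJ
  have hJne : J.Nonempty := hI.image _
  have hsum : ∑ i ∈ J, b.get i = ∑ t ∈ I, b.get (t : ℕ) :=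
    Finset.sum_image (fun x _ y _ h => Fin.ext h)
  have hmemFSb := Hindman.FS.finset_sum b J hJne
  rw [hsum] at hmemFSb
  have hcell := hb hmemFSb
  have hval : ∑ t ∈ I, b.get (t : ℕ) = ∑ i ∈ I.biUnion S, 3 ^ i := by
    rw [Finset.sum_biUnion ?hd]
    · exact Finset.sum_congr rfl (fun t _ => (hSspec t).2)
    · intro t _ u _ htu
      exact hdisj htu
  have hne : (I.biUnion S).Nonempty := by
    obtain ⟨t, ht⟩ := hI
    obtain ⟨i, hi⟩ := (hSspec t).1
    exact ⟨i, Finset.mem_biUnion.mpr ⟨t, ht, hi⟩⟩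
  have := hcell.2
  rw [hψ] at this
  dsimp only at this
  rw [hval, chooseW_eq hne] at this
  exact this

lemma uf_const {α β : Type*} [Finite β] (U : Ultrafilter α) (h : α → β) :
    ∃ c, {K | h K = c} ∈ U := by
  by_contra hc
  push_neg at hc
  have h1 : ∀ c : β, {K | h K = c}ᶜ ∈ U := fun c => Ultrafilter.compl_mem_iff_notMem.mpr (hc c)
  have h2 : (⋂ c : β, {K | h K = c}ᶜ) ∈ U := (Filter.iInter_mem (f := (U : Filter α))).mpr h1
  have h3 : (⋂ c : β, {K | h K = c}ᶜ) = ∅ := by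
    ext K
    simp
  rw [h3] at h2
  exact Filter.empty_notMem (U : Filter α) h2

theorem FUT (β : Type) [Finite β] [Nonempty β] (d : ℕ) :
    ∃ K : ℕ, ∀ χ : Finset ℕ → β, ∃ (S : Fin (d + 1) → Finset ℕ) (c : β),
      (∀ t, (S t).Nonempty) ∧ (∀ t, S t ⊆ Finset.range K) ∧
      (Pairwise fun t u => Disjoint (S t) (S u)) ∧
      ∀ I : Finset (Fin (d + 1)), I.Nonempty → χ (I.biUnion S) = c := by
  by_contra h
  have h2 : ∀ K : ℕ, ∃ χ : Finset ℕ → β, ¬ ∃ (S : Fin (d + 1) → Finset ℕ) (c : β),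
      (∀ t, (S t).Nonempty) ∧ (∀ t, S t ⊆ Finset.range K) ∧
      (Pairwise fun t u => Disjoint (S t) (S u)) ∧
      ∀ I : Finset (Fin (d + 1)), I.Nonempty → χ (I.biUnion S) = c :=
    fun K => not_forall.mp (not_exists.mp h K)
  choose χf hχf using h2
  haveI : Filter.NeBot (@Filter.cofinite ℕ) := Filter.cofinite_neBot
  set U : Ultrafilter ℕ := Ultrafilter.of Filter.cofinite with hU
  have hUc : ∀ s ∈ (Filter.cofinite : Filter ℕ), s ∈ U :=
    fun s hs => Filter.le_def.mp (Ultrafilter.of_le Filter.cofinite) s hs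
  have hlim : ∀ A : Finset ℕ, ∃ c : β, {K | χf K A = c} ∈ U :=
    fun A => uf_const U (fun K => χf K A)
  choose χ hχ using hlim
  obtain ⟨S, c, hne, hdisj, hmono⟩ := FUT_infinite β d χ
  obtain ⟨K₀, hK₀⟩ := Finset.exists_nat_subset_range (Finset.univ.biUnion S)
  have hSK₀ : ∀ t, S t ⊆ Finset.range K₀ :=
    fun t => (Finset.subset_biUnion_of_mem S (Finset.mem_univ t)).trans hK₀
  have hAgree : (⋂ I : Finset (Fin (d + 1)), {K | χf K (I.biUnion S) = χ (I.biUnion S)}) ∈ U :=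
    Filter.iInter_mem.mpr (fun I => hχ _)
  have hTail : {K | K₀ ≤ K} ∈ U := by
    apply hUc
    rw [Filter.mem_cofinite]
    apply Set.Finite.subset (Set.finite_Iio K₀)
    intro K hK
    simp only [Set.mem_compl_iff, Set.mem_setOf_eq, not_le] at hK
    exact hK
  obtain ⟨K, hK1, hK2⟩ := Ultrafilter.nonempty_of_mem (Filter.inter_mem hAgree hTail)
  refine hχf K ⟨S, c, hne, ?_, hdisj, ?_⟩
  · exact fun t => (hSK₀ t).trans (Finset.range_subset_range.mpr hK2)
  · intro I hI
    have := Set.mem_iInter.mp hK1 I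
    exact this.trans (hmono I hI)


section AuxDyn

lemma sum_attachFin' (s : Finset ℕ) {K : ℕ} (h : ∀ m ∈ s, m < K) (f : ℕ → ℤ) :
    ∑ j ∈ s.attachFin h, f j.val = ∑ i ∈ s, f i := by
  rw [← Finset.sum_image (g := fun j : Fin K => j.val) (s := s.attachFin h)
    (by intro x _ y _ hxy; exact Fin.ext hxy)]
  congr 1
  ext i
  simp only [Finset.mem_image, Finset.mem_attachFin]
  constructor
  · rintro ⟨j, hj, rfl⟩; exact hj
  · intro hi; exact ⟨⟨i, h i hi⟩, hi, rfl⟩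

variable {X : Type*} [TopologicalSpace X]

lemma hIter_hIter (T : X ≃ₜ X) (a b : ℤ) (x : X) :
    hIter T a (hIter T b x) = hIter T (a + b) x := by
  simp only [hIter, zIter, ← Equiv.Perm.mul_apply, ← zpow_add]

lemma hIter_continuous (T : X ≃ₜ X) (n : ℤ) : Continuous (hIter T n) := by
  induction n using Int.induction_on with
  | zero =>
    have : hIter T 0 = id := by
      funext x
      simp only [hIter, zIter, zpow_zero]
      rfl
    rw [this]; exact continuous_id
  | succ k ih =>
    have : hIter T ((k : ℤ) + 1) = (hIter T k) ∘ ⇑T := by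
      funext x
      simp only [hIter, zIter, Function.comp_apply]
      rw [zpow_add_one, Equiv.Perm.mul_apply]
      rfl
    rw [this]; exact ih.comp T.continuous
  | pred k ih =>
    have : hIter T (-(k : ℤ) - 1) = (hIter T (-(k : ℤ))) ∘ ⇑T.symm := by
      funext x
      simp only [hIter, zIter, Function.comp_apply]
      rw [zpow_sub_one, Equiv.Perm.mul_apply]
      rfl
    rw [this]; exact ih.comp T.symm.continuous

end AuxDyn

theorem statement13 (P : Set ℤ) :
    (∀ d : ℕ, 1 ≤ d → BirkhoffRecSet d P) ↔ ContainsArbLongFIP P := by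
  constructor
  · -- easy direction: apply to the trivial system
    intro h k hk
    have hmin : MinimalTDS (Homeomorph.refl Unit) := by
      intro x
      have : (Set.range fun n : ℤ => hIter (Homeomorph.refl Unit) n x) = Set.univ :=
        Set.eq_univ_of_forall (fun u => ⟨0, Subsingleton.elim _ _⟩)
      rw [this]; exact dense_univ
    obtain ⟨n, hn, -⟩ := h k hk Unit (Homeomorph.refl Unit) hmin Set.univ isOpen_univ
      ⟨(), trivial⟩
    exact ⟨n, hn⟩
  · -- main direction
    intro hP d hd X _ _ T hmin U hU hUne
    obtain ⟨x₀, hx₀⟩ := hUne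
    -- an open cover of X by preimages of U
    have hcover : (Set.univ : Set X) ⊆ ⋃ n : ℤ, (hIter T n) ⁻¹' U := by
      intro x _
      obtain ⟨y, ⟨n, rfl⟩, hyU⟩ := (hmin x).exists_mem_open hU ⟨x₀, hx₀⟩
      exact Set.mem_iUnion.mpr ⟨n, hyU⟩
    obtain ⟨s, hs⟩ := isCompact_univ.elim_finite_subcover (fun n : ℤ => (hIter T n) ⁻¹' U)
      (fun n => hU.preimage (hIter_continuous T n)) hcover
    -- color each integer by a cover element catching `T^m x₀`
    have hcol : ∀ m : ℤ, ∃ c, c ∈ s ∧ hIter T (c + m) x₀ ∈ U := by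
      intro m
      obtain ⟨c, hc, hmem⟩ := Set.mem_iUnion₂.mp (hs (Set.mem_univ (hIter T m x₀)))
      exact ⟨c, hc, by rwa [Set.mem_preimage, hIter_hIter] at hmem⟩
    choose col hcol1 hcol2 using hcol
    have hsne : s.Nonempty := ⟨col 0, hcol1 0⟩
    haveI : Nonempty {c // c ∈ s} := ⟨⟨col 0, hcol1 0⟩⟩
    obtain ⟨K, hK⟩ := FUT {c // c ∈ s} d
    set K' : ℕ := max K 1 with hK'
    obtain ⟨p, hp⟩ := hP K' (le_max_right _ _)
    set pext : ℕ → ℤ := fun i => if h : i < K' then p ⟨i, h⟩ else 0 with hpext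
    set σ : Finset ℕ → ℤ := fun W => ∑ i ∈ W, pext i with hσ
    set χ : Finset ℕ → {c // c ∈ s} := fun W => ⟨col (σ W), hcol1 (σ W)⟩ with hχ
    obtain ⟨S, c, hSne, hSK, hSdisj, hSmono⟩ := hK χ
    have hSK' : ∀ t, S t ⊆ Finset.range K' :=
      fun t => (hSK t).trans (Finset.range_subset_range.mpr (le_max_left _ _))
    -- any σ of a nonempty subset of range K' is in FS p ⊆ P
    have hσP : ∀ W : Finset ℕ, W.Nonempty → W ⊆ Finset.range K' → σ W ∈ P := by
      intro W hWne hWK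
      apply hp
      have hlt : ∀ m ∈ W, m < K' := fun m hm => Finset.mem_range.mp (hWK hm)
      refine ⟨W.attachFin hlt, ?_, ?_⟩
      · obtain ⟨i, hi⟩ := hWne
        exact ⟨⟨i, hlt i hi⟩, (Finset.mem_attachFin hlt).mpr hi⟩
      · rw [hσ]
        dsimp only
        rw [← sum_attachFin' W hlt pext]
        apply Finset.sum_congr rfl
        intro j hj
        rw [hpext]
        dsimp only
        rw [dif_pos j.isLt]
      -- note: p ⟨j.val, _⟩ = p j
    -- σ is additive on the disjoint family S
    have hσadd : ∀ I : Finset (Fin (d + 1)), σ (I.biUnion S) = ∑ t ∈ I, σ (S t) := by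
      intro I
      rw [hσ]
      dsimp only
      exact Finset.sum_biUnion (fun t _ u _ htu => hSdisj htu)
    -- key returns
    have hkey : ∀ I : Finset (Fin (d + 1)), I.Nonempty →
        hIter T ((c : ℤ) + σ (I.biUnion S)) x₀ ∈ U := by
      intro I hI
      have h1 := hSmono I hI
      rw [hχ] at h1
      have h2 : col (σ (I.biUnion S)) = (c : ℤ) := by
        have := congrArg Subtype.val h1
        exact this
      have := hcol2 (σ (I.biUnion S))
      rwa [h2] at this
    -- the witnesses
    set n : Fin d → ℤ := fun t => σ (S t.succ) with hn
    have hbine : ∀ I : Finset (Fin (d + 1)), I.Nonempty → (I.biUnion S).Nonempty := by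
      intro I hI
      obtain ⟨t, ht⟩ := hI
      obtain ⟨i, hi⟩ := hSne t
      exact ⟨i, Finset.mem_biUnion.mpr ⟨t, ht, hi⟩⟩
    have hbisub : ∀ I : Finset (Fin (d + 1)), I.biUnion S ⊆ Finset.range K' := by
      intro I
      intro i hi
      obtain ⟨t, _, hit⟩ := Finset.mem_biUnion.mp hi
      exact hSK' t hit
    -- FS n decomposition
    have hFSn : ∀ m ∈ FS n, ∃ I : Finset (Fin d), I.Nonempty ∧ m = ∑ t ∈ I, σ (S t.succ) :=
      fun m hm => hm
    have hFSsig : ∀ m ∈ FS n, ∃ I' : Finset (Fin (d + 1)), I'.Nonempty ∧ (0 : Fin (d+1)) ∉ I' ∧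
        m = σ (I'.biUnion S) := by
      intro m hm
      obtain ⟨I, hIne, rfl⟩ := hFSn m hm
      refine ⟨I.image Fin.succ, hIne.image _, ?_, ?_⟩
      · intro hc
        obtain ⟨t, _, ht⟩ := Finset.mem_image.mp hc
        exact (Fin.succ_ne_zero t) ht
      · rw [hσadd, Finset.sum_image (fun x _ y _ hxy => Fin.succ_injective d hxy)]
    refine ⟨n, ?_, ?_⟩
    · -- FS n ⊆ P
      intro m hm
      obtain ⟨I', hI'ne, _, rfl⟩ := hFSsig m hm
      exact hσP _ (hbine I' hI'ne) (hbisub I')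
    · -- the recurrence point
      refine ⟨hIter T ((c : ℤ) + σ (S 0)) x₀, ?_, ?_⟩
      · have := hkey {0} ⟨0, Finset.mem_singleton_self 0⟩
        rwa [Finset.singleton_biUnion] at this
      · rw [Set.mem_iInter₂]
        intro m hm
        obtain ⟨I', hI'ne, h0I', rfl⟩ := hFSsig _ hm
        have hmem := hkey (insert 0 I') (Finset.insert_nonempty 0 I')
        have heq : (c : ℤ) + σ ((insert 0 I').biUnion S)
            = σ (I'.biUnion S) + ((c : ℤ) + σ (S 0)) := by
          rw [hσadd, Finset.sum_insert h0I', ← hσadd]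
          ring
        rw [Set.mem_preimage, hIter_hIter, ← heq]
        exact hmem
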